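/- For every finite sequence of signs σ_0, …, σ_{k−1} ∈ {1, −1}, every contiguous subword u of length 4 of the word (S_{σ_0} ∘ S_{σ_1} ∘ ⋯ ∘ S_{σ_{k−1}})(A) all of whose letters lie in {A, B} (i.e., φ(u) = 1111) equals BABA; that is, BABA is the unique preimage of 1111 under φ among legal words. Here S_σ denotes S₊ if σ = 1 and S₋ if σ = −1. -/

import Mathlib

/-- The four-letter alphabet `{A, B, Ā, B̄}`. -/
inductive Letter : Type
  | A | B | Abar | Bbar
  deriving DecidableEq, Repr

/-- The substitution `S₊ : A ↦ AB, B ↦ AB̄, Ā ↦ ĀB̄, B̄ ↦ ĀB`. -/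
def Splus : Letter → List Letter
  | .A => [.A, .B]
  | .B => [.A, .Bbar]
  | .Abar => [.Abar, .Bbar]
  | .Bbar => [.Abar, .B]

/-- The substitution `S₋ : A ↦ AB̄, B ↦ AB, Ā ↦ ĀB, B̄ ↦ ĀB̄`. -/
def Sminus : Letter → List Letter
  | .A => [.A, .Bbar]
  | .B => [.A, .B]
  | .Abar => [.Abar, .B]
  | .Bbar => [.Abar, .Bbar]

/-- `S_σ` is `S₊` if `σ = 1` and `S₋` otherwise (in particular if `σ = -1`). -/
def Ssign (s : ℤ) : Letter → List Letter :=
  if s = 1 then Splus else Sminus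

/-- `comp σ k u = (S_{σ_0} ∘ S_{σ_1} ∘ ⋯ ∘ S_{σ_{k-1}})(u)`. -/
def comp (σ : ℕ → ℤ) : ℕ → List Letter → List Letter
  | 0, u => u
  | k + 1, u => comp σ k (u.flatMap (Ssign (σ k)))

/-- The factor map `φ : A, B ↦ 1`, `Ā, B̄ ↦ -1`. -/
def phi : Letter → ℂ
  | .A => 1
  | .B => 1
  | .Abar => -1
  | .Bbar => -1

/-- is the letter of `A`-type? -/
def isA : Letter → Bool
  | .A => true
  | .Abar => true
  | _ => false

lemma block (s : ℤ) (a : Letter) :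
    ∃ α β, Ssign s a = [α, β] ∧ isA α = true ∧ isA β = false := by
  unfold Ssign
  split <;> cases a <;> exact ⟨_, _, rfl, rfl, rfl⟩

/-- the positive letter of sign `s` -/
def posL (s : ℤ) : Letter := if s = 1 then .A else .B

lemma posblock (s : ℤ) (a : Letter)
    (h : ∀ x ∈ Ssign s a, phi x = 1) :
    Ssign s a = [.A, .B] ∧ a = posL s := by
  unfold Ssign posL at *
  split at h <;> cases a <;> simp_all [Splus, Sminus, phi] <;>
    exact absurd h (by norm_num)

lemma pos_letter {a : Letter} (h : phi a = 1) : a = .A ∨ a = .B := by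
  cases a <;> simp_all [phi] <;> exact absurd h (by norm_num)

lemma chain_flat (s : ℤ) (v : List Letter) :
    List.Chain' (fun a b => isA a ≠ isA b) (v.flatMap (Ssign s)) ∧
      ∀ y ∈ (v.flatMap (Ssign s)).head?, isA y = true := by
  induction v with
  | nil => simp; exact List.isChain_nil
  | cons a v ih =>
    obtain ⟨α, β, hab, hα, hβ⟩ := block s a
    rw [List.flatMap_cons, hab]
    constructor
    · rw [List.Chain', List.isChain_append]
      refine ⟨by simp [hα, hβ], ih.1, ?_⟩
      intro x hx y hy
      simp at hx
      subst hx
      rw [hβ, ih.2 y hy]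
      simp
    · intro y hy
      simp at hy
      subst hy
      exact hα

lemma no_xx (s : ℤ) (v : List Letter) (x : Letter)
    (h : [x, x] <:+: v.flatMap (Ssign s)) : False := by
  have := ((chain_flat s v).1.infix h)
  simp [List.isChain_cons_cons] at this

lemma comp_succ (k : ℕ) : ∀ (σ : ℕ → ℤ) (u : List Letter),
    comp σ (k + 1) u = (comp (fun n => σ (n + 1)) k u).flatMap (Ssign (σ 0)) := by
  induction k with
  | zero => intro σ u; rfl
  | succ k ih =>
    intro σ u
    show comp σ (k + 1) (u.flatMap (Ssign (σ (k + 1)))) = _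
    rw [ih σ (u.flatMap (Ssign (σ (k + 1))))]
    rfl

lemma noDup (σ : ℕ → ℤ) (k : ℕ) (x : Letter) : ¬ [x, x] <:+: comp σ k [Letter.A] := by
  cases k with
  | zero =>
    intro h
    have := h.length_le
    simp [comp] at this
  | succ k =>
    rw [comp_succ]
    exact no_xx _ _ x

lemma key (s : ℤ) (v : List Letter) :
    ∀ (u : List Letter), (∀ x, ¬ [x, x] <:+: v) → u.length = 4 →
    u <:+: v.flatMap (Ssign s) → (∀ a ∈ u, phi a = 1) →
    u = [Letter.B, Letter.A, Letter.B, Letter.A] := by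
  induction v with
  | nil =>
    intro u _ hlen hinf _
    have := hinf.length_le
    simp [hlen] at this
  | cons a v ih =>
    intro u hnd hlen hinf hone
    obtain ⟨α, β, hab, hα, hβ⟩ := block s a
    rw [List.flatMap_cons, hab] at hinf
    rcases u with _ | ⟨u0, _ | ⟨u1, _ | ⟨u2, _ | ⟨u3, _ | ⟨u4, u⟩⟩⟩⟩⟩ <;> simp at hlen
    rw [show ([α, β] : List Letter) ++ v.flatMap (Ssign s) = α :: β :: v.flatMap (Ssign s) from rfl] at hinf
    rw [List.infix_cons_iff] at hinf
    rcases hinf with hpre | hinf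
    · -- u starts at the very beginning: [α, β, γ, δ] aligned, two full blocks
      obtain ⟨t, ht⟩ := hpre
      simp only [List.cons_append, List.cons.injEq] at ht
      obtain ⟨rfl, rfl, hrest⟩ := ht
      -- hrest : u2 :: u3 :: t = v.flatMap (Ssign s)
      rcases v with _ | ⟨b, v'⟩
      · simp at hrest
      obtain ⟨γ, δ, hb, hγ, hδ⟩ := block s b
      rw [List.flatMap_cons, hb] at hrest
      simp only [List.cons_append, List.cons.injEq] at hrest
      obtain ⟨rfl, rfl, _⟩ := hrest
      -- both blocks are all positive
      have hapos : ∀ x ∈ Ssign s a, phi x = 1 := by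
        rw [hab]
        intro x hx
        simp only [List.mem_cons, List.not_mem_nil, or_false] at hx
        rcases hx with rfl | rfl
        · exact hone _ (by simp)
        · exact hone _ (by simp)
      have hbpos : ∀ x ∈ Ssign s b, phi x = 1 := by
        rw [hb]
        intro x hx
        simp only [List.mem_cons, List.not_mem_nil, or_false] at hx
        rcases hx with rfl | rfl
        · exact hone _ (by simp)
        · exact hone _ (by simp)
      have ha' : a = posL s := (posblock s a hapos).2
      have hb' : b = posL s := (posblock s b hbpos).2
      exact absurd ⟨[], v', by rw [ha', hb']; rfl⟩ (hnd (posL s))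
    rw [List.infix_cons_iff] at hinf
    rcases hinf with hpre | hinf
    · -- u starts at the second letter of the first block
      obtain ⟨t, ht⟩ := hpre
      simp only [List.cons_append, List.cons.injEq] at ht
      obtain ⟨rfl, hrest⟩ := ht
      -- hrest : u1 :: u2 :: u3 :: t = v.flatMap (Ssign s)
      rcases v with _ | ⟨b, v'⟩
      · simp at hrest
      obtain ⟨γ, δ, hb, hγ, hδ⟩ := block s b
      rw [List.flatMap_cons, hb] at hrest
      simp only [List.cons_append, List.cons.injEq] at hrest
      obtain ⟨rfl, rfl, hrest⟩ := hrest
      -- hrest : u3 :: t = v'.flatMap (Ssign s)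
      rcases v' with _ | ⟨c, v''⟩
      · simp at hrest
      obtain ⟨ε, ζ, hc, hε, hζ⟩ := block s c
      rw [List.flatMap_cons, hc] at hrest
      simp only [List.cons_append, List.cons.injEq] at hrest
      obtain ⟨rfl, _⟩ := hrest
      -- u = [u0, γ, δ, ε], u0 = β B-type positive, [γ,δ] positive block, ε A-type positive
      have h0 : u0 = Letter.B := by
        rcases pos_letter (hone u0 (by simp)) with rfl | rfl
        · simp [isA] at hβ
        · rfl
      have hbpos : ∀ x ∈ Ssign s b, phi x = 1 := by
        rw [hb]
        intro x hx
        simp only [List.mem_cons, List.not_mem_nil, or_false] at hx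
        rcases hx with rfl | rfl
        · exact hone _ (by simp)
        · exact hone _ (by simp)
      have hgd : Ssign s b = [Letter.A, Letter.B] := (posblock s b hbpos).1
      rw [hb] at hgd
      simp only [List.cons.injEq] at hgd
      obtain ⟨rfl, rfl, _⟩ := hgd
      have h3 : u3 = Letter.A := by
        rcases pos_letter (hone u3 (by simp)) with rfl | rfl
        · rfl
        · simp [isA] at hε
      rw [h0, h3]
    · -- u lies in the tail
      exact ih _ (fun x hx => hnd x (List.infix_cons hx)) (by simp) hinf hone

/-- Every contiguous subword of length `4` of `(S_{σ_0} ∘ ⋯ ∘ S_{σ_{k-1}})(A)`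
all of whose letters lie in `{A, B}` (i.e. with `φ`-image `1111`) equals `BABA`. -/
theorem stmt14 (σ : ℕ → ℤ) (hσ : ∀ k, σ k = 1 ∨ σ k = -1) (k : ℕ)
    (u : List Letter) (hlen : u.length = 4) (hinfix : u <:+: comp σ k [Letter.A])
    (hone : ∀ a ∈ u, phi a = 1) :
    u = [Letter.B, Letter.A, Letter.B, Letter.A] := by
  cases k with
  | zero =>
    have := hinfix.length_le
    simp [comp, hlen] at this
  | succ k =>
    rw [comp_succ] at hinfix
    exact key (σ 0) _ u (noDup _ k) hlen hinfix hone
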